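/- Let F = GF(p^n) for a prime p, and let A(n,p) be the group of lower unitriangular 3×3 matrices V(a,b,c) = [[1,0,0],[a,1,0],[b,c,1]] over F. Then the commuting graph of A(n,p) is isomorphic to (p^n + 1)·K_{p^{2n} - p^n}, and hence its spectrum is {(-1) with multiplicity p^{3n} - 2p^n - 1, (p^{2n} - p^n - 1) with multiplicity p^n + 1}. -/

import Mathlib

open Polynomial

/-- The commuting graph of a group: vertices are non-central elements,
adjacent iff distinct and commuting. -/
def commGraph (G : Type*) [Group G] : SimpleGraph {x : G // x ∉ Subgroup.center G} where
  Adj x y := x ≠ y ∧ (x : G) * y = y * x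
  symm := ⟨by rintro x y ⟨h1, h2⟩; exact ⟨h1.symm, h2.symm⟩⟩
  loopless := ⟨by rintro x ⟨h, _⟩; exact h rfl⟩

/-- The characteristic polynomial (over ℝ) of the adjacency matrix of the
commuting graph of a finite group. -/
noncomputable def commCharpoly (G : Type*) [Group G] [Finite G] : Polynomial ℝ := by
  classical
  have : Fintype G := Fintype.ofFinite G
  exact (SimpleGraph.adjMatrix ℝ (commGraph G)).charpoly

/-- The disjoint union of `k` copies of the complete graph on `m` vertices. -/
def completeUnion (k m : ℕ) : SimpleGraph (Fin k × Fin m) where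
  Adj x y := x ≠ y ∧ x.1 = y.1
  symm := ⟨by rintro x y ⟨h1, h2⟩; exact ⟨h1.symm, h2.symm⟩⟩
  loopless := ⟨by rintro x ⟨h, _⟩; exact h rfl⟩

/-- The group `A(n, p)` of lower unitriangular `3×3` matrices `V(a,b,c)` over `F`,
with multiplication `V(a,b,c)·V(a',b',c') = V(a+a', b+b'+c·a', c+c')`. -/
structure TriGroup (F : Type*) where
  a : F
  b : F
  c : F

namespace TriGroup

variable {F : Type*} [Field F]

instance : Mul (TriGroup F) :=
  ⟨fun x y => ⟨x.a + y.a, x.b + y.b + x.c * y.a, x.c + y.c⟩⟩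
instance : One (TriGroup F) := ⟨⟨0, 0, 0⟩⟩
instance : Inv (TriGroup F) := ⟨fun x => ⟨-x.a, -x.b + x.c * x.a, -x.c⟩⟩

lemma mul_def (x y : TriGroup F) :
    x * y = ⟨x.a + y.a, x.b + y.b + x.c * y.a, x.c + y.c⟩ := rfl
lemma one_def : (1 : TriGroup F) = ⟨0, 0, 0⟩ := rfl
lemma inv_def (x : TriGroup F) : x⁻¹ = ⟨-x.a, -x.b + x.c * x.a, -x.c⟩ := rfl

instance : Group (TriGroup F) where
  mul_assoc x y z := by
    simp only [mul_def, mk.injEq]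
    refine ⟨by ring, by ring, by ring⟩
  one_mul x := by cases x; simp [mul_def, one_def]
  mul_one x := by cases x; simp [mul_def, one_def]
  inv_mul_cancel x := by
    simp only [mul_def, inv_def, one_def, mk.injEq]
    refine ⟨by ring, by ring, by ring⟩

instance [Finite F] : Finite (TriGroup F) :=
  Finite.of_equiv (F × F × F)
    ⟨fun p => ⟨p.1, p.2.1, p.2.2⟩, fun x => (x.a, x.b, x.c), fun _ => rfl, fun _ => rfl⟩

end TriGroup


namespace TriGroup

variable {F : Type*} [Field F]

lemma mem_center_iff (x : TriGroup F) :
    x ∈ Subgroup.center (TriGroup F) ↔ x.a = 0 ∧ x.c = 0 := by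
  rw [Subgroup.mem_center_iff]
  constructor
  · intro h
    constructor
    · have := h ⟨0, 0, 1⟩
      simp only [mul_def, mk.injEq] at this
      have := this.2.1
      linear_combination this
    · have := h ⟨1, 0, 0⟩
      simp only [mul_def, mk.injEq] at this
      have := this.2.1
      linear_combination -this
  · rintro ⟨h1, h2⟩ g
    simp only [mul_def, mk.injEq, h1, h2]
    refine ⟨by ring, by ring, by ring⟩

lemma commute_iff (x y : TriGroup F) :
    x * y = y * x ↔ x.c * y.a = y.c * x.a := by
  simp only [mul_def, mk.injEq]
  constructor
  · intro h
    linear_combination h.2.1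
  · intro h
    refine ⟨by ring, by linear_combination h, by ring⟩

end TriGroup

open TriGroup in
/-- slopeMap map -/
noncomputable def slopeMap {F : Type*} [Field F]
    (x : {x : TriGroup F // x ∉ Subgroup.center (TriGroup F)}) : Option F := by
  classical
  exact if (x : TriGroup F).a = 0 then none else some ((x : TriGroup F).c / (x : TriGroup F).a)

lemma slopeMap_spec {F : Type*} [Field F]
    (x y : {x : TriGroup F // x ∉ Subgroup.center (TriGroup F)}) :
    slopeMap x = slopeMap y ↔ (x : TriGroup F).c * (y : TriGroup F).a
      = (y : TriGroup F).c * (x : TriGroup F).a := by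
  classical
  have hx : ¬((x : TriGroup F).a = 0 ∧ (x : TriGroup F).c = 0) := by
    have := x.2; rw [TriGroup.mem_center_iff] at this; exact this
  have hy : ¬((y : TriGroup F).a = 0 ∧ (y : TriGroup F).c = 0) := by
    have := y.2; rw [TriGroup.mem_center_iff] at this; exact this
  unfold slopeMap
  by_cases ha : (x : TriGroup F).a = 0 <;> by_cases hb : (y : TriGroup F).a = 0
  · simp [ha, hb]
  · have hc : (x : TriGroup F).c ≠ 0 := fun h => hx ⟨ha, h⟩
    rw [if_pos ha, if_neg hb]
    simp only [reduceCtorEq, false_iff]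
    intro h
    rw [ha, mul_zero] at h
    rcases mul_eq_zero.mp h with h' | h'
    · exact hc h'
    · exact hb h'
  · have hc : (y : TriGroup F).c ≠ 0 := fun h => hy ⟨hb, h⟩
    rw [if_neg ha, if_pos hb]
    simp only [reduceCtorEq, false_iff]
    intro h
    rw [hb, mul_zero] at h
    rcases mul_eq_zero.mp h.symm with h' | h'
    · exact hc h'
    · exact ha h'
  · rw [if_neg ha, if_neg hb]
    simp only [Option.some.injEq]
    rw [div_eq_div_iff ha hb]

section FiberIso

attribute [local instance] Classical.propDecidable

/-- Generic: a graph whose adjacency is "distinct with equal fiber" is a union of cliques. -/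
lemma iso_completeUnion_of_fiber {V K : Type*} [Fintype V] [Fintype K] [DecidableEq K]
    (G : SimpleGraph V) (f : V → K) (k m : ℕ) (hk : Fintype.card K = k)
    (hm : ∀ i : K, Fintype.card {x : V // f x = i} = m)
    (hadj : ∀ x y, G.Adj x y ↔ x ≠ y ∧ f x = f y) :
    Nonempty (G ≃g completeUnion k m) := by
  classical
  let eK : K ≃ Fin k := Fintype.equivFinOfCardEq hk
  let g : ∀ i : K, {x : V // f x = i} ≃ Fin m := fun i => Fintype.equivFinOfCardEq (hm i)
  let e : V ≃ Fin k × Fin m :=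
    ((Equiv.sigmaFiberEquiv f).symm.trans (Equiv.sigmaCongrRight g)).trans
      ((Equiv.sigmaEquivProd K (Fin m)).trans (eK.prodCongr (Equiv.refl (Fin m))))
  have hfst : ∀ x : V, (e x).1 = eK (f x) := fun x => rfl
  refine ⟨⟨e, ?_⟩⟩
  intro x y
  show (completeUnion k m).Adj (e x) (e y) ↔ G.Adj x y
  rw [hadj]
  constructor
  · rintro ⟨h1, h2⟩
    refine ⟨fun h => h1 (by rw [h]), ?_⟩
    rw [hfst, hfst] at h2
    exact eK.injective h2
  · rintro ⟨h1, h2⟩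
    exact ⟨fun h => h1 (e.injective h), by rw [hfst, hfst, h2]⟩

variable {F : Type*} [Field F] [Fintype F]

noncomputable instance : Fintype (TriGroup F) := Fintype.ofFinite _

/-- fiber over `some s` -/
noncomputable def fiberSomeEquiv (s : F) :
    {x : {x : TriGroup F // x ∉ Subgroup.center (TriGroup F)} // slopeMap x = some s} ≃
      {a : F // a ≠ 0} × F := by
  classical
  refine
  { toFun := fun x => ⟨⟨(x.1 : TriGroup F).a, ?_⟩, (x.1 : TriGroup F).b⟩
    invFun := fun y => ⟨⟨⟨y.1.1, y.2, s * y.1.1⟩, ?_⟩, ?_⟩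
    left_inv := ?_
    right_inv := ?_ }
  · intro h
    have := x.2
    unfold slopeMap at this
    rw [if_pos h] at this
    cases this
  · rw [TriGroup.mem_center_iff]
    push_neg
    intro h
    exact absurd h y.1.2
  · unfold slopeMap
    rw [if_neg y.1.2]
    simp only [Option.some.injEq]
    rw [mul_div_assoc, div_self y.1.2, mul_one]
  · rintro ⟨⟨x, hx⟩, hfx⟩
    have ha : x.a ≠ 0 := by
      intro h
      unfold slopeMap at hfx
      simp only [h, if_pos] at hfx
      cases hfx
    have hc : x.c = s * x.a := by
      unfold slopeMap at hfx
      rw [if_neg ha] at hfx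
      simp only [Option.some.injEq] at hfx
      field_simp at hfx
      linear_combination hfx
    apply Subtype.ext
    apply Subtype.ext
    show TriGroup.mk x.a x.b (s * x.a) = x
    rw [← hc]
  · rintro ⟨⟨a, ha⟩, b⟩
    rfl

/-- fiber over `none` -/
noncomputable def fiberNoneEquiv :
    {x : {x : TriGroup F // x ∉ Subgroup.center (TriGroup F)} // slopeMap x = none} ≃
      {c : F // c ≠ 0} × F := by
  classical
  refine
  { toFun := fun x => ⟨⟨(x.1 : TriGroup F).c, ?_⟩, (x.1 : TriGroup F).b⟩
    invFun := fun y => ⟨⟨⟨0, y.2, y.1.1⟩, ?_⟩, ?_⟩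
    left_inv := ?_
    right_inv := ?_ }
  · intro h
    have ha : (x.1 : TriGroup F).a = 0 := by
      by_contra ha
      have := x.2
      unfold slopeMap at this
      rw [if_neg ha] at this
      cases this
    have := x.1.2
    rw [TriGroup.mem_center_iff] at this
    exact this ⟨ha, h⟩
  · rw [TriGroup.mem_center_iff]
    push_neg
    intro _
    exact y.1.2
  · unfold slopeMap
    rw [if_pos rfl]
  · rintro ⟨⟨x, hx⟩, hfx⟩
    have ha : x.a = 0 := by
      by_contra ha
      unfold slopeMap at hfx
      rw [if_neg ha] at hfx
      cases hfx
    apply Subtype.ext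
    apply Subtype.ext
    show TriGroup.mk 0 x.b x.c = x
    rw [← ha]
  · rintro ⟨⟨c, hc⟩, b⟩
    rfl

lemma card_ne_zero : Fintype.card {a : F // a ≠ 0} = Fintype.card F - 1 := by
  classical
  rw [Fintype.card_subtype_compl, Fintype.card_subtype_eq]

lemma fiber_card (i : Option F) :
    Fintype.card {x : {x : TriGroup F // x ∉ Subgroup.center (TriGroup F)} // slopeMap x = i}
      = (Fintype.card F - 1) * Fintype.card F := by
  classical
  cases i with
  | none =>
      rw [Fintype.card_congr (fiberNoneEquiv (F := F)), Fintype.card_prod, card_ne_zero]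
  | some s =>
      rw [Fintype.card_congr (fiberSomeEquiv (F := F) s), Fintype.card_prod, card_ne_zero]

end FiberIso

section CharpolyGlue

open Matrix

noncomputable def Amat (m : ℕ) : Matrix (Fin m) (Fin m) ℝ :=
  Matrix.of fun i j => if i = j then 0 else 1

lemma det_Bmat (m : ℕ) (hm : 2 ≤ m) (t : ℝ) :
    (Matrix.of fun i j : Fin m => (if i = j then t else 0) - Amat m i j).det
      = (t + 1) ^ (m - 1) * (t - ((m : ℝ) - 1)) := by
  by_cases ht : t = -1
  · subst ht
    rw [Matrix.det_zero_of_row_eq (i := ⟨0, by omega⟩) (j := ⟨1, by omega⟩)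
      (by simp [Fin.ext_iff]) ?_]
    · rw [show (-1 + 1 : ℝ) = 0 by ring, zero_pow (by omega), zero_mul]
    · funext j
      simp only [Matrix.of_apply, Amat]
      split <;> split <;> norm_num
  · have ht' : t + 1 ≠ 0 := fun h => ht (by linarith)
    have key : (Matrix.of fun i j : Fin m => (if i = j then t else 0) - Amat m i j)
        = (t+1) • (1 + Matrix.replicateCol Unit (fun _ => -(t+1)⁻¹) * Matrix.replicateRow Unit (fun _ => (1:ℝ))) := by
      ext i j
      by_cases h : i = j <;>
        simp [h, Amat, Matrix.one_apply, Matrix.mul_apply, mul_add, mul_comm] <;>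
        field_simp <;>
        ring
    rw [key, Matrix.det_smul, Matrix.det_one_add_replicateCol_mul_replicateRow]
    simp only [dotProduct, Finset.sum_const, Finset.card_univ, Fintype.card_fin,
      nsmul_eq_mul, mul_neg, mul_one]
    have hpow : (t+1) ^ m = (t+1) ^ (m-1) * (t+1) := by
      rw [← pow_succ]; congr 1; omega
    rw [hpow]
    field_simp
    ring

lemma charpoly_Amat (m : ℕ) (hm : 2 ≤ m) :
    (Amat m).charpoly = (X + 1) ^ (m - 1) * (X - C ((m : ℝ) - 1)) := by
  apply Polynomial.funext
  intro t
  have h1 : (Amat m).charpoly.eval t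
      = (Matrix.of fun i j : Fin m => (if i = j then t else 0) - Amat m i j).det := by
    rw [Matrix.charpoly, ← Polynomial.coe_evalRingHom, RingHom.map_det]
    congr 1
    ext i j
    by_cases h : i = j <;>
      simp [h, Matrix.charmatrix_apply_eq, Matrix.charmatrix_apply_ne]
  rw [h1, det_Bmat m hm t]
  simp

lemma charmatrix_blockDiagonal' {R : Type*} [CommRing R] {o m' : Type*} [DecidableEq o]
    [DecidableEq m'] [Fintype o] [Fintype m'] (M : o → Matrix m' m' R) :
    charmatrix (blockDiagonal M) = blockDiagonal fun i => charmatrix (M i) := by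
  ext ⟨i, ki⟩ ⟨j, kj⟩
  by_cases hk : ki = kj <;>
    by_cases hij : i = j <;>
      simp [hk, hij, Matrix.charmatrix_apply, Matrix.blockDiagonal_apply,
        Matrix.diagonal_apply, Prod.ext_iff]

lemma adjMatrix_completeUnion (k m : ℕ) [DecidableRel (completeUnion k m).Adj] :
    SimpleGraph.adjMatrix ℝ (completeUnion k m)
      = (Matrix.blockDiagonal fun _ : Fin k => Amat m).submatrix
          (Equiv.prodComm (Fin k) (Fin m)) (Equiv.prodComm (Fin k) (Fin m)) := by
  ext x y
  by_cases h1 : x.1 = y.1 <;> by_cases h2 : x.2 = y.2 <;>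
    simp [completeUnion, SimpleGraph.adjMatrix_apply, Matrix.blockDiagonal_apply,
      Amat, Prod.ext_iff, h1, h2]

lemma charpoly_completeUnion (k m : ℕ) (hm : 2 ≤ m) [DecidableRel (completeUnion k m).Adj] :
    (SimpleGraph.adjMatrix ℝ (completeUnion k m)).charpoly
      = (X + 1) ^ (k * (m - 1)) * (X - C ((m : ℝ) - 1)) ^ k := by
  rw [adjMatrix_completeUnion,
    show ((Equiv.prodComm (Fin k) (Fin m)) : Fin k × Fin m → Fin m × Fin k)
      = ((Equiv.prodComm (Fin m) (Fin k)).symm : Fin k × Fin m → Fin m × Fin k) from rfl,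
    ← Matrix.reindex_apply, Matrix.charpoly_reindex, Matrix.charpoly,
    charmatrix_blockDiagonal', Matrix.det_blockDiagonal]
  rw [Finset.prod_const, Finset.card_univ, Fintype.card_fin, ← Matrix.charpoly,
    charpoly_Amat m hm, mul_pow, ← pow_mul, mul_comm (m-1) k]

lemma charpoly_of_iso {V W : Type*} [Fintype V] [Fintype W] [DecidableEq V] [DecidableEq W]
    {G : SimpleGraph V} {H : SimpleGraph W} [DecidableRel G.Adj] [DecidableRel H.Adj]
    (φ : G ≃g H) :
    (SimpleGraph.adjMatrix ℝ G).charpoly = (SimpleGraph.adjMatrix ℝ H).charpoly := by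
  have key : SimpleGraph.adjMatrix ℝ G
      = (SimpleGraph.adjMatrix ℝ H).reindex φ.toEquiv.symm φ.toEquiv.symm := by
    ext i j
    simp [Matrix.reindex_apply, SimpleGraph.adjMatrix_apply, φ.map_adj_iff]
  rw [key, Matrix.charpoly_reindex]

lemma adj_charpoly_congr {V : Type*} (G : SimpleGraph V)
    (F1 F2 : Fintype V) (D1 D2 : DecidableEq V) (R1 R2 : DecidableRel G.Adj) :
    @Matrix.charpoly ℝ _ V D1 F1 (@SimpleGraph.adjMatrix ℝ V G R1 _ _) =
    @Matrix.charpoly ℝ _ V D2 F2 (@SimpleGraph.adjMatrix ℝ V G R2 _ _) := by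
  have hF : F1 = F2 := Subsingleton.elim _ _
  have hD : D1 = D2 := by funext a b; exact Subsingleton.elim _ _
  have hR : R1 = R2 := by funext a b; exact Subsingleton.elim _ _
  subst hF; subst hD; subst hR; rfl

end CharpolyGlue

lemma arith_aux (Q : ℕ) (h : 2 ≤ Q) :
    (Q + 1) * (Q * Q - Q - 1) = Q * Q * Q - 2 * Q - 1 := by
  have c1' : Q + 1 ≤ Q * Q := by nlinarith
  have c1 : Q ≤ Q * Q := by omega
  have c2 : 1 ≤ Q * Q - Q := by omega
  have c3 : 2 * Q + 1 ≤ Q * Q * Q := by nlinarith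
  have c4 : 1 ≤ Q * Q * Q - 2 * Q := by omega
  zify [c1, c2, c4, show 2 * Q ≤ Q * Q * Q by omega]
  ring


/-- For `F = GF(pⁿ)`, the commuting graph of `A(n,p)` is isomorphic to
`(pⁿ+1)·K_{p²ⁿ-pⁿ}`, and hence its spectrum is
`{(-1)^{p³ⁿ-2pⁿ-1}, (p²ⁿ-pⁿ-1)^{pⁿ+1}}`. -/
theorem commGraph_TriGroup
    (p n : ℕ) (hp : p.Prime) (F : Type*) [Field F] [Fintype F]
    (hF : Fintype.card F = p ^ n) :
    Nonempty (commGraph (TriGroup F) ≃g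
      completeUnion (p ^ n + 1) (p ^ (2 * n) - p ^ n)) ∧
    commCharpoly (TriGroup F) =
      (X + 1) ^ (p ^ (3 * n) - 2 * p ^ n - 1)
        * (X - C ((p : ℝ) ^ (2 * n) - (p : ℝ) ^ n - 1)) ^ (p ^ n + 1) := by
  classical
  set Q := p ^ n with hQ
  have hq2 : 2 ≤ Q := by
    rw [← hF]; exact Fintype.one_lt_card
  have hQQ : p ^ (2 * n) = Q * Q := by rw [two_mul, pow_add]
  have hQQQ : p ^ (3 * n) = Q * Q * Q := by
    rw [show 3 * n = n + n + n by ring, pow_add, pow_add]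
  have hk : Fintype.card (Option F) = Q + 1 := by
    rw [Fintype.card_option, hF]
  have hm : ∀ i : Option F,
      Fintype.card {x : {x : TriGroup F // x ∉ Subgroup.center (TriGroup F)} // slopeMap x = i}
        = p ^ (2 * n) - p ^ n := by
    intro i
    rw [fiber_card, hF, hQQ, Nat.sub_mul, one_mul]
  have hadj : ∀ x y : {x : TriGroup F // x ∉ Subgroup.center (TriGroup F)},
      (commGraph (TriGroup F)).Adj x y ↔ x ≠ y ∧ slopeMap x = slopeMap y := by
    intro x y
    show (x ≠ y ∧ (x : TriGroup F) * y = y * x) ↔ _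
    rw [TriGroup.commute_iff, ← slopeMap_spec]
  obtain ⟨φ⟩ := iso_completeUnion_of_fiber (commGraph (TriGroup F)) slopeMap
    (p ^ n + 1) (p ^ (2 * n) - p ^ n) hk hm hadj
  refine ⟨⟨φ⟩, ?_⟩
  have hm2 : 2 ≤ p ^ (2 * n) - p ^ n := by
    rw [hQQ]
    have h1 : 2 * Q ≤ Q * Q := by nlinarith
    omega
  have e1 : commCharpoly (TriGroup F)
      = (SimpleGraph.adjMatrix ℝ (commGraph (TriGroup F))).charpoly :=
    adj_charpoly_congr _ _ _ _ _ _ _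
  rw [e1, charpoly_of_iso φ, charpoly_completeUnion _ _ hm2]
  have hle1 : p ^ n ≤ p ^ (2 * n) := by rw [hQQ, ← hQ]; nlinarith
  congr 1
  · congr 1
    rw [hQQ, hQQQ]
    exact arith_aux Q hq2
  · congr 2
    push_cast [Nat.cast_sub hle1]
    ring
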